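/- For any ADSAGA state, E[φ1⁺ + φ2⁺] − (φ1 + φ2) ≤ −2·p_min·η²·‖v‖² − (2·η·m·p_min/n)·⟨y, Σ_{i=1}^n ∇f_i(x)⟩ + η²·p_min·(4·m·L_f·η + 4)·Σ_j ‖u_j‖² + (16·m·p_min·η²/n)·Σ_j ‖g*_j‖² + (16·m·p_min·η²/n)·Σ_j ‖β*_j‖² + (η²·m·p_min/n)·(4·m·η·L_f + 16)·Σ_i ‖α*_i‖² + (8·m·p_min·η²/n)·Σ_i ‖∇f_i(x) − ∇f_i(x*)‖², where the superscript ⁺ denotes the value at the state produced by one step with choice (j, i). -/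

import Mathlib

open Finset
open scoped RealInnerProductSpace BigOperators

noncomputable section

/-- The state of the ADSAGA algorithm. -/
structure AdsagaState (d n m : ℕ) where
  x : EuclideanSpace ℝ (Fin d)
  u : Fin m → EuclideanSpace ℝ (Fin d)
  g : Fin m → EuclideanSpace ℝ (Fin d)
  beta : Fin m → EuclideanSpace ℝ (Fin d)
  alpha : Fin n → EuclideanSpace ℝ (Fin d)
  idx : Fin m → Fin n

namespace AdsagaState

variable {d n m : ℕ}

/-- `h_j = g_j - β_j`. -/
def hvec (S : AdsagaState d n m) (j : Fin m) : EuclideanSpace ℝ (Fin d) :=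
  S.g j - S.beta j

/-- `ᾱ = (1/n) ∑ i, α_i`. -/
def abar (S : AdsagaState d n m) : EuclideanSpace ℝ (Fin d) :=
  ((1 : ℝ) / n) • ∑ i, S.alpha i

/-- `v = ∑ j, u_j + m • ᾱ`. -/
def v (S : AdsagaState d n m) : EuclideanSpace ℝ (Fin d) :=
  (∑ j, S.u j) + (m : ℝ) • S.abar

/-- One ADSAGA step with choice `(j, i)` (where `i` is meant to lie in `S_j`). -/
def step (gradf : Fin n → EuclideanSpace ℝ (Fin d) → EuclideanSpace ℝ (Fin d))
    (p : Fin m → ℝ) (pmin η : ℝ) (S : AdsagaState d n m) (j : Fin m) (i : Fin n) :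
    AdsagaState d n m where
  x := S.x - (η * pmin / p j) • (S.u j + S.abar)
  alpha := Function.update S.alpha (S.idx j) (S.g j)
  g := Function.update S.g j (gradf i S.x)
  beta := Function.update S.beta j (if i = S.idx j then S.g j else S.alpha i)
  u := Function.update S.u j
    ((1 - pmin / p j) • S.u j
      + (pmin / p j) • (gradf i S.x - (if i = S.idx j then S.g j else S.alpha i))
      - ((m : ℝ) / n * (1 - pmin / p j)) • S.hvec j)
  idx := Function.update S.idx j i

/-- Run `k` ADSAGA steps, with the `t`-th choice given by the index `ω t` (on machine `J (ω t)`). -/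
def run (gradf : Fin n → EuclideanSpace ℝ (Fin d) → EuclideanSpace ℝ (Fin d))
    (p : Fin m → ℝ) (pmin η : ℝ) (J : Fin n → Fin m) (S0 : AdsagaState d n m) :
    (k : ℕ) → (Fin k → Fin n) → AdsagaState d n m
  | 0, _ => S0
  | (k + 1), ω =>
      step gradf p pmin η (run gradf p pmin η J S0 k (fun t => ω t.castSucc))
        (J (ω (Fin.last k))) (ω (Fin.last k))

end AdsagaState

/-- `φ1 = 4mη (f(x) - f(x^*))` where `f` is the average of the `f_i`. -/
def phi1 (f : Fin n → EuclideanSpace ℝ (Fin d) → ℝ) (xstar : EuclideanSpace ℝ (Fin d))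
    {m : ℕ} (η : ℝ) (S : AdsagaState d n m) : ℝ :=
  4 * (m : ℝ) * η * ((((1 : ℝ) / n) * ∑ i, f i S.x) - (((1 : ℝ) / n) * ∑ i, f i xstar))

/-- `φ2 = ‖y‖² - 2η⟪y, v⟫ + 2η²‖v‖²`. -/
def phi2 (xstar : EuclideanSpace ℝ (Fin d)) {n m : ℕ} (η : ℝ) (S : AdsagaState d n m) : ℝ :=
  ‖S.x - xstar‖ ^ 2 - 2 * η * ⟪S.x - xstar, S.v⟫ + 2 * η ^ 2 * ‖S.v‖ ^ 2

/-- `φ3 = η² c3 ∑ j, (pmin / p j) ‖g*_j‖²`. -/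
def phi3 (gradf : Fin n → EuclideanSpace ℝ (Fin d) → EuclideanSpace ℝ (Fin d))
    (xstar : EuclideanSpace ℝ (Fin d)) {m : ℕ} (p : Fin m → ℝ) (pmin η c3 : ℝ)
    (S : AdsagaState d n m) : ℝ :=
  η ^ 2 * c3 * ∑ j, (pmin / p j) * ‖S.g j - gradf (S.idx j) xstar‖ ^ 2

/-- `φ4 = η² c4 (2 ∑ i, (pmin / p (J i)) ‖α*_i‖² - ∑ j, (pmin / p j) ‖β*_j‖²)`. -/
def phi4 (gradf : Fin n → EuclideanSpace ℝ (Fin d) → EuclideanSpace ℝ (Fin d))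
    (xstar : EuclideanSpace ℝ (Fin d)) {m : ℕ} (J : Fin n → Fin m) (p : Fin m → ℝ)
    (pmin η c4 : ℝ) (S : AdsagaState d n m) : ℝ :=
  η ^ 2 * c4 * ((2 * ∑ i, (pmin / p (J i)) * ‖S.alpha i - gradf i xstar‖ ^ 2)
    - ∑ j, (pmin / p j) * ‖S.beta j - gradf (S.idx j) xstar‖ ^ 2)

/-- `φ5 = η² c5 ∑ j, ‖u_j‖²`. -/
def phi5 {d n m : ℕ} (η c5 : ℝ) (S : AdsagaState d n m) : ℝ :=
  η ^ 2 * c5 * ∑ j, ‖S.u j‖ ^ 2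

/-- The total potential `φ = φ1 + φ2 + φ3 + φ4 + φ5`. -/
def phiTot (f : Fin n → EuclideanSpace ℝ (Fin d) → ℝ)
    (gradf : Fin n → EuclideanSpace ℝ (Fin d) → EuclideanSpace ℝ (Fin d))
    (xstar : EuclideanSpace ℝ (Fin d)) {m : ℕ} (J : Fin n → Fin m) (p : Fin m → ℝ)
    (pmin η c3 c4 c5 : ℝ) (S : AdsagaState d n m) : ℝ :=
  phi1 f xstar η S + phi2 xstar η S + phi3 gradf xstar p pmin η c3 S
    + phi4 gradf xstar J p pmin η c4 S + phi5 η c5 S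

end

section AuxLemmas

variable {d : ℕ}

local notation "E" => EuclideanSpace ℝ (Fin d)

lemma amgm_inner (t : ℝ) (ht : 0 < t) (x y : E) :
    2 * ⟪x, y⟫ ≤ t * ‖x‖ ^ 2 + t⁻¹ * ‖y‖ ^ 2 := by
  have h0 : (0:ℝ) ≤ ‖t • x - y‖ ^ 2 := sq_nonneg _
  rw [norm_sub_sq_real, real_inner_smul_left, norm_smul] at h0
  have habs : |t| = t := abs_of_pos ht
  rw [Real.norm_eq_abs, habs] at h0
  have ht' : t ≠ 0 := ne_of_gt ht
  have h1 : (0:ℝ) ≤ t⁻¹ * ((t * ‖x‖) ^ 2 - 2 * (t * ⟪x,y⟫) + ‖y‖ ^ 2) :=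
    mul_nonneg (le_of_lt (inv_pos.mpr ht)) h0
  have h2 : t⁻¹ * t = 1 := inv_mul_cancel₀ ht'
  have h3 : t⁻¹ * (t * ‖x‖) ^ 2 = t * ‖x‖^2 := by
    field_simp
  nlinarith [h1, h2, h3]

lemma sq_norm_sum_le {ι : Type*} (s : Finset ι) (f : ι → E) :
    ‖∑ i ∈ s, f i‖ ^ 2 ≤ (s.card : ℝ) * ∑ i ∈ s, ‖f i‖ ^ 2 := by
  calc ‖∑ i ∈ s, f i‖ ^ 2 ≤ (∑ i ∈ s, ‖f i‖) ^ 2 := by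
        have := norm_sum_le s f
        have h0 : (0:ℝ) ≤ ‖∑ i ∈ s, f i‖ := norm_nonneg _
        nlinarith
    _ ≤ (s.card : ℝ) * ∑ i ∈ s, ‖f i‖ ^ 2 := by
        have := sq_sum_le_card_mul_sum_sq (s := s) (f := fun i => ‖f i‖)
        exact_mod_cast this

end AuxLemmas

section Descent
variable {d : ℕ}
local notation "E" => EuclideanSpace ℝ (Fin d)

lemma descent_lemma (F : E → ℝ) (G : E → E) (hF : ∀ x, HasGradientAt F (G x) x)
    (Lf : ℝ) (hLip : ∀ x y, ‖G x - G y‖ ≤ Lf * ‖x - y‖) (x x' : E) :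
    F x' ≤ F x + ⟪G x, x' - x⟫ + Lf / 2 * ‖x' - x‖ ^ 2 := by
  set dv : E := x' - x with hdv
  set c1 : ℝ := ⟪G x, dv⟫ with hc1
  set c2 : ℝ := Lf / 2 * ‖dv‖ ^ 2 with hc2
  set φ : ℝ → ℝ := fun t => F (x + t • dv) - t * c1 - c2 * t ^ 2 with hφ
  have hline : ∀ t : ℝ, HasDerivAt (fun s : ℝ => x + s • dv) dv t := by
    intro t
    simpa using ((hasDerivAt_id t).smul_const dv).const_add x
  have hd : ∀ t : ℝ, HasDerivAt φ (⟪G (x + t • dv), dv⟫ - c1 - c2 * (2 * t)) t := by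
    intro t
    have h1 : HasDerivAt (fun s : ℝ => F (x + s • dv)) ⟪G (x + t • dv), dv⟫ t := by
      have hg := (hasGradientAt_iff_hasFDerivAt.mp (hF (x + t • dv)))
      have := hg.comp_hasDerivAt t (hline t)
      simpa [InnerProductSpace.toDual_apply_apply, Function.comp_def] using this
    have h2 : HasDerivAt (fun s : ℝ => s * c1) c1 t := hasDerivAt_mul_const c1
    have h3 : HasDerivAt (fun s : ℝ => c2 * s ^ 2) (c2 * (2 * t)) t := by
      simpa [mul_comm] using ((hasDerivAt_pow 2 t).const_mul c2)
    exact (h1.sub h2).sub h3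
  have hmono : AntitoneOn φ (Set.Icc (0:ℝ) 1) := by
    apply antitoneOn_of_deriv_nonpos (convex_Icc 0 1)
    · exact fun t _ => (hd t).continuousAt.continuousWithinAt
    · intro t _
      exact ((hd t).differentiableAt).differentiableWithinAt
    · intro t ht
      rw [interior_Icc] at ht
      rw [(hd t).deriv]
      have hb : ⟪G (x + t • dv) - G x, dv⟫ ≤ Lf * t * ‖dv‖ ^ 2 := by
        calc ⟪G (x + t • dv) - G x, dv⟫ ≤ ‖G (x + t • dv) - G x‖ * ‖dv‖ :=
              real_inner_le_norm _ _
          _ ≤ Lf * ‖(x + t • dv) - x‖ * ‖dv‖ := by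
              have := hLip (x + t • dv) x
              nlinarith [norm_nonneg dv]
          _ = Lf * t * ‖dv‖ ^ 2 := by
              have : (x + t • dv) - x = t • dv := by abel
              rw [this, norm_smul, Real.norm_eq_abs, abs_of_pos ht.1]; ring
      have hsplit : ⟪G (x + t • dv), dv⟫ - c1 = ⟪G (x + t • dv) - G x, dv⟫ := by
        rw [hc1, inner_sub_left]
      rw [sub_sub, ← sub_sub, hsplit, hc2]
      nlinarith [hb]
  have h01 := hmono (Set.mem_Icc.mpr ⟨le_refl 0, zero_le_one⟩)
    (Set.mem_Icc.mpr ⟨zero_le_one, le_refl 1⟩) zero_le_one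
  simp only [hφ] at h01
  simp at h01
  have hx' : x + dv = x' := by rw [hdv]; abel
  rw [hx'] at h01
  rw [hc1, hc2, hdv] at h01 ⊢
  linarith

end Descent

section Aux2
variable {d : ℕ}
local notation "E" => EuclideanSpace ℝ (Fin d)

lemma neg_two_inner_le (t : ℝ) (ht : 0 < t) (x y : E) :
    -(2*⟪x, y⟫) ≤ t * ‖x‖ ^ 2 + t⁻¹ * ‖y‖ ^ 2 := by
  have := amgm_inner t ht x (-y)
  rw [inner_neg_right, norm_neg] at this
  linarith

lemma norm_sub_sq_le' (t : ℝ) (ht : 0 < t) (x y : E) :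
    ‖x - y‖ ^ 2 ≤ (1+t) * ‖x‖ ^ 2 + (1+t⁻¹) * ‖y‖ ^ 2 := by
  have h1 := neg_two_inner_le t ht x y
  rw [norm_sub_sq_real]
  linarith

lemma two_inner_le' (x y : E) : 2*⟪x, y⟫ ≤ ‖x‖ ^ 2 + ‖y‖ ^ 2 := by
  have := amgm_inner 1 one_pos x y
  simpa using this

end Aux2

lemma mul_le_of_bounds (a b r : ℝ) (ha : 0 < a) (ha1 : a ≤ 1) (hbr : b ≤ r) (hr : 0 ≤ r) :
    a * b ≤ r := by
  rcases le_or_gt b 0 with h | h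
  · nlinarith
  · nlinarith


set_option maxHeartbeats 2000000

theorem adsaga_phi12_decrease
    {d n m : ℕ} (hd : 0 < d) (hn : 0 < n) (hm : 0 < m) (hmn : m ∣ n)
    (L Lf μ : ℝ) (hL : 0 < L) (hLf : 0 < Lf) (hμ : 0 < μ)
    (f : Fin n → EuclideanSpace ℝ (Fin d) → ℝ)
    (gradf : Fin n → EuclideanSpace ℝ (Fin d) → EuclideanSpace ℝ (Fin d))
    (hgrad : ∀ i x, HasGradientAt (f i) (gradf i x) x)
    (hconv : ∀ i, ConvexOn ℝ Set.univ (f i))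
    (hsmooth : ∀ i (x y : EuclideanSpace ℝ (Fin d)), ‖gradf i x - gradf i y‖ ≤ L * ‖x - y‖)
    (hFsmooth : ∀ x y : EuclideanSpace ℝ (Fin d),
      ‖((1 : ℝ) / n) • (∑ i, gradf i x) - ((1 : ℝ) / n) • (∑ i, gradf i y)‖ ≤ Lf * ‖x - y‖)
    (hFstrong : ∀ x y : EuclideanSpace ℝ (Fin d),
      μ * ‖x - y‖ ^ 2 ≤
        ⟪((1 : ℝ) / n) • (∑ i, gradf i x) - ((1 : ℝ) / n) • (∑ i, gradf i y), x - y⟫)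
    (xstar : EuclideanSpace ℝ (Fin d))
    (hmin : ∀ x : EuclideanSpace ℝ (Fin d),
      (((1 : ℝ) / n) * ∑ i, f i xstar) ≤ ((1 : ℝ) / n) * ∑ i, f i x)
    (hstarzero : (∑ i, gradf i xstar) = 0)
    (J : Fin n → Fin m)
    (hpart : ∀ j, (Finset.univ.filter (fun i => J i = j)).card = n / m)
    (p : Fin m → ℝ) (hp : ∀ j, 0 < p j) (hpsum : (∑ j, p j) = 1)
    (pmin pmax : ℝ)
    (hpmin : IsLeast (Set.range p) pmin) (hpmax : IsGreatest (Set.range p) pmax)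
    (η : ℝ) (hη : 0 < η)
    (S : AdsagaState d n m)
    (hidx : ∀ j, J (S.idx j) = j)
    (hinv : ∀ j, S.alpha (S.idx j) = S.beta j)
    :
    (∑ i : Fin n, p (J i) * ((m : ℝ) / n) *
        (phi1 f xstar η (AdsagaState.step gradf p pmin η S (J i) i) + phi2 xstar η (AdsagaState.step gradf p pmin η S (J i) i)))
        - (phi1 f xstar η S + phi2 xstar η S)
      ≤ -2 * pmin * η ^ 2 * ‖S.v‖ ^ 2
        - (2 * η * (m : ℝ) * pmin / n) * ⟪S.x - xstar, ∑ i, gradf i S.x⟫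
        + η ^ 2 * pmin * (4 * (m : ℝ) * Lf * η + 4) * (∑ j, ‖S.u j‖ ^ 2)
        + (16 * (m : ℝ) * pmin * η ^ 2 / n) * (∑ j, ‖S.g j - gradf (S.idx j) xstar‖ ^ 2)
        + (16 * (m : ℝ) * pmin * η ^ 2 / n) * (∑ j, ‖S.beta j - gradf (S.idx j) xstar‖ ^ 2)
        + (η ^ 2 * (m : ℝ) * pmin / n) * (4 * (m : ℝ) * η * Lf + 16) *
            (∑ i, ‖S.alpha i - gradf i xstar‖ ^ 2)
        + (8 * (m : ℝ) * pmin * η ^ 2 / n) * (∑ i, ‖gradf i S.x - gradf i xstar‖ ^ 2) := by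
  classical
  have hm0 : (0:ℝ) < m := by exact_mod_cast hm
  have hn0 : (0:ℝ) < n := by exact_mod_cast hn
  have hmn' : (m:ℝ) ≤ n := by exact_mod_cast Nat.le_of_dvd hn hmn
  set κ : ℝ := (m:ℝ)/n with hκdef
  set N : ℝ := (n:ℝ)/m with hNdef
  have hκ0 : 0 < κ := div_pos hm0 hn0
  have hN0 : 0 < N := div_pos hn0 hm0
  have hκN : κ * N = 1 := by rw [hκdef, hNdef]; field_simp
  have hκ1 : κ ≤ 1 := by rw [hκdef]; exact div_le_one_of_le₀ hmn' (le_of_lt hn0)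
  have hNcast : ((n/m : ℕ) : ℝ) = N := by
    rw [hNdef, Nat.cast_div hmn (by exact_mod_cast hm.ne')]
  obtain ⟨j0, hj0⟩ := hpmin.1
  have hpmin0 : 0 < pmin := hj0 ▸ hp j0
  have hple : ∀ j, pmin ≤ p j := fun j => hpmin.2 ⟨j, rfl⟩
  set q : Fin m → ℝ := fun j => pmin / p j with hqdef
  have hq0 : ∀ j, 0 < q j := fun j => div_pos hpmin0 (hp j)
  have hq1 : ∀ j, q j ≤ 1 := fun j => div_le_one_of_le₀ (hple j) (le_of_lt (hp j))
  have hpq : ∀ j, p j * q j = pmin := fun j => by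
    rw [hqdef, mul_comm, div_mul_eq_mul_div, div_eq_iff (ne_of_gt (hp j))]
  set y : EuclideanSpace ℝ (Fin d) := S.x - xstar with hydef
  set aa : Fin m → EuclideanSpace ℝ (Fin d) := fun j => S.u j + S.abar with haadef
  set bb : Fin n → EuclideanSpace ℝ (Fin d) :=
    fun i => if i = S.idx (J i) then S.g (J i) else S.alpha i with hbbdef
  set zz : Fin n → EuclideanSpace ℝ (Fin d) := fun i => gradf i S.x - bb i with hzzdef
  set ww : Fin n → EuclideanSpace ℝ (Fin d) :=
    fun i => zz i - S.u (J i) + κ • S.hvec (J i) with hwwdef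
  set c : ℝ := (m:ℝ) * Lf * η with hcdef
  have hc0 : 0 ≤ c := by positivity
  -- step components
  have hstx : ∀ i, (AdsagaState.step gradf p pmin η S (J i) i).x
      = S.x - (η * q (J i)) • aa (J i) := by
    intro i
    show S.x - (η * pmin / p (J i)) • (S.u (J i) + S.abar) = S.x - (η * q (J i)) • aa (J i)
    rw [hqdef, haadef, mul_div_assoc]
  have hstv : ∀ i, (AdsagaState.step gradf p pmin η S (J i) i).v
      = S.v + q (J i) • ww i := by
    intro i
    have hsub : ∀ (F : Fin m → EuclideanSpace ℝ (Fin d)) (b : EuclideanSpace ℝ (Fin d)),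
        ∑ j', Function.update F (J i) b j' = (∑ j', F j') + (b - F (J i)) := by
      intro F b
      rw [Finset.sum_update_of_mem (Finset.mem_univ _)]
      rw [Finset.sum_sdiff_eq_sub (Finset.singleton_subset_iff.mpr (Finset.mem_univ _)),
        Finset.sum_singleton]
      abel
    have hsubn : ∀ (F : Fin n → EuclideanSpace ℝ (Fin d)) (k : Fin n)
        (b : EuclideanSpace ℝ (Fin d)),
        ∑ i', Function.update F k b i' = (∑ i', F i') + (b - F k) := by
      intro F k b
      rw [Finset.sum_update_of_mem (Finset.mem_univ _)]
      rw [Finset.sum_sdiff_eq_sub (Finset.singleton_subset_iff.mpr (Finset.mem_univ _)),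
        Finset.sum_singleton]
      abel
    show (∑ j', Function.update S.u (J i) _ j') + (m:ℝ) • (((1:ℝ)/n) •
        ∑ i', Function.update S.alpha (S.idx (J i)) (S.g (J i)) i') = _
    rw [hsubn]
    rw [hsub]
    rw [hinv (J i)]
    simp only [hqdef, hκdef, hwwdef, hzzdef, hbbdef, AdsagaState.hvec, AdsagaState.v,
      AdsagaState.abar]
    module
  have hfibV : ∀ (F : Fin m → EuclideanSpace ℝ (Fin d)), ∑ i, F (J i) = N • ∑ j, F j := by
    intro F
    rw [← Finset.sum_fiberwise univ J (fun i => F (J i)), Finset.smul_sum]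
    apply Finset.sum_congr rfl
    intro j _
    rw [Finset.sum_congr rfl (fun i hi => by rw [(Finset.mem_filter.mp hi).2] :
        ∀ i ∈ univ.filter (fun i => J i = j), F (J i) = F j)]
    rw [Finset.sum_const, hpart j, ← hNcast, Nat.cast_smul_eq_nsmul]
  have hfib : ∀ (F : Fin m → ℝ), ∑ i, F (J i) = N * ∑ j, F j := by
    intro F
    rw [← Finset.sum_fiberwise univ J (fun i => F (J i)), Finset.mul_sum]
    apply Finset.sum_congr rfl
    intro j _
    rw [Finset.sum_congr rfl (fun i hi => by rw [(Finset.mem_filter.mp hi).2] :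
        ∀ i ∈ univ.filter (fun i => J i = j), F (J i) = F j)]
    rw [Finset.sum_const, hpart j, nsmul_eq_mul, hNcast]
  have hsumaa : ∑ j, aa j = S.v := by
    rw [haadef]
    rw [Finset.sum_add_distrib, Finset.sum_const, Finset.card_univ, Fintype.card_fin]
    show (∑ j, S.u j) + m • S.abar = S.v
    rw [← Nat.cast_smul_eq_nsmul ℝ]
    rfl
  have hbbsum : ∑ i, bb i = (∑ i, S.alpha i) + ∑ j, S.hvec j := by
    have h1 : ∀ i, bb i = S.alpha i + (if i = S.idx (J i) then S.g (J i) - S.alpha i else 0) := by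
      intro i; rw [hbbdef]
      by_cases h : i = S.idx (J i)
      · simp only [if_pos h]; abel
      · simp only [if_neg h]; rw [add_zero]
    rw [Finset.sum_congr rfl (fun i _ => h1 i), Finset.sum_add_distrib]
    congr 1
    rw [← Finset.sum_fiberwise univ J (fun i => if i = S.idx (J i) then S.g (J i) - S.alpha i else 0)]
    apply Finset.sum_congr rfl
    intro j _
    rw [Finset.sum_congr rfl (fun i hi => by rw [(Finset.mem_filter.mp hi).2] :
        ∀ i ∈ univ.filter (fun i => J i = j),
          (if i = S.idx (J i) then S.g (J i) - S.alpha i else 0)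
          = (if i = S.idx j then S.g j - S.alpha i else 0))]
    rw [Finset.sum_eq_single_of_mem (S.idx j)
        (Finset.mem_filter.mpr ⟨Finset.mem_univ _, hidx j⟩)
        (fun i _ hne => if_neg hne)]
    rw [if_pos rfl, hinv j]
    rfl
  have hwwsum : ∑ i, ww i = (∑ i, gradf i S.x) - N • S.v := by
    have h1 : ∑ i, ww i = (∑ i, zz i) - (∑ i, S.u (J i)) + κ • ∑ i, S.hvec (J i) := by
      rw [hwwdef]
      rw [Finset.sum_add_distrib, Finset.sum_sub_distrib, ← Finset.smul_sum]
    have h2 : ∑ i, zz i = (∑ i, gradf i S.x) - ∑ i, bb i := by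
      rw [hzzdef, Finset.sum_sub_distrib]
    have h3 : κ • ∑ i, S.hvec (J i) = ∑ j, S.hvec j := by
      rw [hfibV (fun j => S.hvec j), smul_smul, hκN, one_smul]
    have hNv : N • S.v = N • (∑ j, S.u j) + (∑ i, S.alpha i) := by
      show N • ((∑ j, S.u j) + (m:ℝ) • S.abar) = _
      rw [smul_add]
      congr 1
      show N • ((m:ℝ) • (((1:ℝ)/n) • ∑ i, S.alpha i)) = ∑ i, S.alpha i
      rw [smul_smul, smul_smul]
      have he : N * (m:ℝ) * ((1:ℝ)/n) = 1 := by rw [hNdef]; field_simp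
      rw [he, one_smul]
    rw [h1, h2, h3, hbbsum, hfibV (fun j => S.u j), hNv]
    abel
  -- gradient of the average
  have hFgrad : ∀ x : EuclideanSpace ℝ (Fin d),
      HasGradientAt (fun x => ((1:ℝ)/n) * ∑ i, f i x) (((1:ℝ)/n) • ∑ i, gradf i x) x := by
    intro x
    rw [hasGradientAt_iff_hasFDerivAt]
    have h1 : HasFDerivAt (fun x => ∑ i, f i x)
        (∑ i, (InnerProductSpace.toDual ℝ (EuclideanSpace ℝ (Fin d)) (gradf i x))) x :=
      HasFDerivAt.fun_sum (fun i _ => hasGradientAt_iff_hasFDerivAt.mp (hgrad i x))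
    have h2 := h1.const_mul ((1:ℝ)/n)
    have h3 : (InnerProductSpace.toDual ℝ (EuclideanSpace ℝ (Fin d)))
        (((1:ℝ)/n) • ∑ i, gradf i x)
        = ((1:ℝ)/n) • ∑ i, (InnerProductSpace.toDual ℝ (EuclideanSpace ℝ (Fin d)) (gradf i x)) := by
      rw [map_smul, map_sum]
    rw [h3]
    exact h2
  -- per-step phi2 difference, exact
  have hΔ2 : ∀ i, phi2 xstar η (AdsagaState.step gradf p pmin η S (J i) i) - phi2 xstar η S
      = -2*(η*q (J i))*⟪y, aa (J i)⟫ + (η*q (J i))^2*‖aa (J i)‖^2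
        - 2*η*(q (J i)*⟪y, ww i⟫ - (η*q (J i))*⟪aa (J i), S.v⟫
            - (η*q (J i))*(q (J i))*⟪aa (J i), ww i⟫)
        + 2*η^2*(2*(q (J i))*⟪S.v, ww i⟫ + (q (J i))^2*‖ww i‖^2) := by
    intro i
    simp only [phi2]
    rw [hstx i, hstv i]
    rw [sub_right_comm S.x ((η * q (J i)) • aa (J i)) xstar, ← hydef]
    simp only [norm_sub_sq_real, norm_add_sq_real, inner_sub_left, inner_sub_right,
      inner_add_left, inner_add_right, real_inner_smul_left, real_inner_smul_right,
      norm_smul, Real.norm_eq_abs, mul_pow, sq_abs]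
    ring
  -- per-step phi1 difference, bounded via descent lemma
  have hΔ1 : ∀ i, phi1 f xstar η (AdsagaState.step gradf p pmin η S (J i) i) - phi1 f xstar η S
      ≤ 4*(m:ℝ)*η*( -(η*q (J i))*⟪((1:ℝ)/n) • ∑ k, gradf k S.x, aa (J i)⟫
          + Lf/2*(η*q (J i))^2*‖aa (J i)‖^2) := by
    intro i
    have hd := descent_lemma (fun x => ((1:ℝ)/n) * ∑ k, f k x)
      (fun x => ((1:ℝ)/n) • ∑ k, gradf k x) hFgrad Lf hFsmooth S.x
      ((AdsagaState.step gradf p pmin η S (J i) i).x)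
    have hx' : (AdsagaState.step gradf p pmin η S (J i) i).x - S.x
        = (-(η * q (J i))) • aa (J i) := by
      rw [hstx i, neg_smul]; abel
    rw [hx'] at hd
    rw [real_inner_smul_right, norm_smul, Real.norm_eq_abs, mul_pow, sq_abs, neg_sq] at hd
    simp only [phi1]
    have h4 : (0:ℝ) ≤ 4*(m:ℝ)*η := by positivity
    have hd' : (((1:ℝ)/n) * ∑ k, f k (AdsagaState.step gradf p pmin η S (J i) i).x)
        - (((1:ℝ)/n) * ∑ k, f k S.x)
        ≤ -(η*q (J i))*⟪((1:ℝ)/n) • ∑ k, gradf k S.x, aa (J i)⟫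
          + Lf/2*(η*q (J i))^2*‖aa (J i)‖^2 := by linarith
    have hfin := mul_le_mul_of_nonneg_left hd' h4
    linarith
  -- the per-i upper bound
  set bound : Fin n → ℝ := fun i =>
    4*(m:ℝ)*η*( -(η*q (J i))*⟪((1:ℝ)/n) • ∑ k, gradf k S.x, aa (J i)⟫
          + Lf/2*(η*q (J i))^2*‖aa (J i)‖^2)
    + (-2*(η*q (J i))*⟪y, aa (J i)⟫ + (η*q (J i))^2*‖aa (J i)‖^2
        - 2*η*(q (J i)*⟪y, ww i⟫ - (η*q (J i))*⟪aa (J i), S.v⟫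
            - (η*q (J i))*(q (J i))*⟪aa (J i), ww i⟫)
        + 2*η^2*(2*(q (J i))*⟪S.v, ww i⟫ + (q (J i))^2*‖ww i‖^2)) with hbounddef
  -- first reduction : LHS ≤ ∑ ρ i * bound i
  have hred : (∑ i : Fin n, p (J i) * κ *
        (phi1 f xstar η (AdsagaState.step gradf p pmin η S (J i) i) + phi2 xstar η (AdsagaState.step gradf p pmin η S (J i) i)))
        - (phi1 f xstar η S + phi2 xstar η S)
      ≤ ∑ i, p (J i) * κ * bound i := by
    have hρ1 : ∑ i : Fin n, p (J i) * κ = 1 := by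
      rw [hfib (fun j => p j * κ), ← Finset.sum_mul, hpsum, one_mul, mul_comm]
      exact hκN
    have hconst : (phi1 f xstar η S + phi2 xstar η S)
        = ∑ i : Fin n, p (J i) * κ * (phi1 f xstar η S + phi2 xstar η S) := by
      rw [← Finset.sum_mul, hρ1, one_mul]
    rw [hconst, ← Finset.sum_sub_distrib]
    apply Finset.sum_le_sum
    intro i _
    rw [← mul_sub]
    apply mul_le_mul_of_nonneg_left _ (mul_nonneg (le_of_lt (hp (J i))) (le_of_lt hκ0))
    have h1 := hΔ1 i
    have h2 := hΔ2 i
    rw [hbounddef]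
    simp only
    linarith
  -- closed form of the weighted sum of bounds
  have hclosed : ∑ i, p (J i) * κ * bound i
      = -2 * pmin * η ^ 2 * ‖S.v‖ ^ 2 - (2 * η * (m:ℝ) * pmin / n) * ⟪y, ∑ i, gradf i S.x⟫
        + κ * pmin * η^2 * ∑ i, q (J i) *
            ((2*c+1)*‖aa (J i)‖^2 + 2*⟪aa (J i), ww i⟫ + 2*‖ww i‖^2) := by
    have hper : ∀ i, p (J i) * κ * bound i = κ * pmin * (
        (-(4*(m:ℝ)*η^2)) * ⟪((1:ℝ)/n) • ∑ k, gradf k S.x, aa (J i)⟫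
        + (-(2*η)) * ⟪y, aa (J i)⟫
        + (2*η^2) * ⟪aa (J i), S.v⟫
        + (-(2*η)) * ⟪y, ww i⟫
        + (4*η^2) * ⟪S.v, ww i⟫
        + η^2 * (q (J i) * ((2*c+1)*‖aa (J i)‖^2 + 2*⟪aa (J i), ww i⟫ + 2*‖ww i‖^2))) := by
      intro i
      rw [hbounddef]
      simp only [hcdef]
      linear_combination (κ * ( 4*(m:ℝ)*η*(-(η*⟪((1:ℝ)/n) • ∑ k, gradf k S.x, aa (J i)⟫))
        - 2*η*⟪y, aa (J i)⟫ - 2*η*⟪y, ww i⟫ + 2*η^2*⟪aa (J i), S.v⟫ + 4*η^2*⟪S.v, ww i⟫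
        + q (J i) * (4*(m:ℝ)*η*(Lf/2*η^2*‖aa (J i)‖^2) + η^2*‖aa (J i)‖^2
            + 2*η^2*⟪aa (J i), ww i⟫ + 2*η^2*‖ww i‖^2) )) * hpq (J i)
    have hS1 : ∑ i, ⟪((1:ℝ)/n) • ∑ k, gradf k S.x, aa (J i)⟫
        = N * (((1:ℝ)/n) * ⟪∑ k, gradf k S.x, S.v⟫) := by
      rw [hfib (fun j => ⟪((1:ℝ)/n) • ∑ k, gradf k S.x, aa j⟫), ← inner_sum, hsumaa,
        real_inner_smul_left]
    have hS2 : ∑ i, ⟪y, aa (J i)⟫ = N * ⟪y, S.v⟫ := by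
      rw [hfib (fun j => ⟪y, aa j⟫), ← inner_sum, hsumaa]
    have hS3 : ∑ i, ⟪aa (J i), S.v⟫ = N * ‖S.v‖^2 := by
      rw [hfib (fun j => ⟪aa j, S.v⟫), ← sum_inner, hsumaa, real_inner_self_eq_norm_sq]
    have hS4 : ∑ i, ⟪y, ww i⟫ = ⟪y, ∑ i, gradf i S.x⟫ - N * ⟪y, S.v⟫ := by
      rw [← inner_sum, hwwsum, inner_sub_right, real_inner_smul_right]
    have hS5 : ∑ i, ⟪S.v, ww i⟫ = ⟪∑ i, gradf i S.x, S.v⟫ - N * ‖S.v‖^2 := by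
      rw [← inner_sum, hwwsum, inner_sub_right, real_inner_smul_right,
        real_inner_self_eq_norm_sq, real_inner_comm]
    calc ∑ i, p (J i) * κ * bound i
        = ∑ i, κ * pmin * (
        (-(4*(m:ℝ)*η^2)) * ⟪((1:ℝ)/n) • ∑ k, gradf k S.x, aa (J i)⟫
        + (-(2*η)) * ⟪y, aa (J i)⟫
        + (2*η^2) * ⟪aa (J i), S.v⟫
        + (-(2*η)) * ⟪y, ww i⟫
        + (4*η^2) * ⟪S.v, ww i⟫
        + η^2 * (q (J i) * ((2*c+1)*‖aa (J i)‖^2 + 2*⟪aa (J i), ww i⟫ + 2*‖ww i‖^2))) :=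
          Finset.sum_congr rfl (fun i _ => hper i)
      _ = κ * pmin * ∑ i, (
        (-(4*(m:ℝ)*η^2)) * ⟪((1:ℝ)/n) • ∑ k, gradf k S.x, aa (J i)⟫
        + (-(2*η)) * ⟪y, aa (J i)⟫
        + (2*η^2) * ⟪aa (J i), S.v⟫
        + (-(2*η)) * ⟪y, ww i⟫
        + (4*η^2) * ⟪S.v, ww i⟫
        + η^2 * (q (J i) * ((2*c+1)*‖aa (J i)‖^2 + 2*⟪aa (J i), ww i⟫ + 2*‖ww i‖^2))) := by
          rw [← Finset.mul_sum]
      _ = κ * pmin * (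
        (-(4*(m:ℝ)*η^2)) * (N * (((1:ℝ)/n) * ⟪∑ k, gradf k S.x, S.v⟫))
        + (-(2*η)) * (N * ⟪y, S.v⟫)
        + (2*η^2) * (N * ‖S.v‖^2)
        + (-(2*η)) * (⟪y, ∑ i, gradf i S.x⟫ - N * ⟪y, S.v⟫)
        + (4*η^2) * (⟪∑ i, gradf i S.x, S.v⟫ - N * ‖S.v‖^2)
        + η^2 * (∑ i, q (J i) * ((2*c+1)*‖aa (J i)‖^2 + 2*⟪aa (J i), ww i⟫ + 2*‖ww i‖^2))) := by
          rw [Finset.sum_add_distrib, Finset.sum_add_distrib, Finset.sum_add_distrib,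
            Finset.sum_add_distrib, Finset.sum_add_distrib]
          rw [← Finset.mul_sum, ← Finset.mul_sum, ← Finset.mul_sum, ← Finset.mul_sum,
            ← Finset.mul_sum, ← Finset.mul_sum]
          rw [hS1, hS2, hS3, hS4, hS5]
      _ = -2 * pmin * η ^ 2 * ‖S.v‖ ^ 2 - (2 * η * (m:ℝ) * pmin / n) * ⟪y, ∑ i, gradf i S.x⟫
        + κ * pmin * η^2 * ∑ i, q (J i) *
            ((2*c+1)*‖aa (J i)‖^2 + 2*⟪aa (J i), ww i⟫ + 2*‖ww i‖^2) := by
          linear_combination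
            (-(4*η^2*κ*pmin*⟪∑ i, gradf i S.x, S.v⟫) - 2*η^2*pmin*‖S.v‖^2) * hκN
            + (4*η^2*κ*pmin*⟪∑ i, gradf i S.x, S.v⟫*N
                - 2*η*pmin*⟪y, ∑ i, gradf i S.x⟫) * hκdef
  -- stage 2 : bounding the remainder
  have hstage2 : κ * ∑ i, q (J i) *
            ((2*c+1)*‖aa (J i)‖^2 + 2*⟪aa (J i), ww i⟫ + 2*‖ww i‖^2)
      ≤ (4*c+4) * (∑ j, ‖S.u j‖^2)
        + 16*κ*(∑ j, ‖S.g j - gradf (S.idx j) xstar‖^2)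
        + 16*κ*(∑ j, ‖S.beta j - gradf (S.idx j) xstar‖^2)
        + κ*(4*c+16)*(∑ i, ‖S.alpha i - gradf i xstar‖^2)
        + 8*κ*(∑ i, ‖gradf i S.x - gradf i xstar‖^2) := by
    have hκ0' : (0:ℝ) ≤ κ := le_of_lt hκ0
    have key : ∀ j, (q j) * (∑ i ∈ univ.filter (fun i' => J i' = j),
          ((2*c+1)*‖aa j‖^2 + 2*⟪aa j, ww i⟫ + 2*‖ww i‖^2))
        ≤ N*(4*c+4)*(‖S.u j‖^2 + ‖S.abar‖^2)
          + 16*(‖S.g j - gradf (S.idx j) xstar‖^2 + ‖S.beta j - gradf (S.idx j) xstar‖^2)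
          + 10*(∑ i ∈ univ.filter (fun i' => J i' = j), ‖S.alpha i - gradf i xstar‖^2)
          + 8*(∑ i ∈ univ.filter (fun i' => J i' = j), ‖gradf i S.x - gradf i xstar‖^2) := by
      intro j
      have hTcard : (((univ.filter (fun i' => J i' = j)).card) : ℝ) = N := by
        rw [hpart j]; exact hNcast
      have hidxT : S.idx j ∈ univ.filter (fun i' => J i' = j) :=
        Finset.mem_filter.mpr ⟨Finset.mem_univ _, hidx j⟩
      have hwT : ∀ i ∈ univ.filter (fun i' => J i' = j),
          ww i = zz i - (S.u j - κ • S.hvec j) := by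
        intro i hi
        rw [hwwdef]
        simp only
        rw [(Finset.mem_filter.mp hi).2]
        module
      have hZD : (∑ i ∈ univ.filter (fun i' => J i' = j), zz i)
          = (∑ i ∈ univ.filter (fun i' => J i' = j), (gradf i S.x - S.alpha i))
            - S.hvec j := by
        have h0 : ∀ i ∈ univ.filter (fun i' => J i' = j),
            zz i = (gradf i S.x - S.alpha i)
              - (if i = S.idx j then S.g j - S.alpha i else 0) := by
          intro i hi
          simp only [hzzdef, hbbdef]
          rw [(Finset.mem_filter.mp hi).2]
          by_cases h : i = S.idx j
          · rw [if_pos h, if_pos h]; abel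
          · rw [if_neg h, if_neg h]; abel
        rw [Finset.sum_congr rfl h0, Finset.sum_sub_distrib]
        congr 1
        rw [Finset.sum_eq_single_of_mem (S.idx j) hidxT (fun i _ hne => if_neg hne),
          if_pos rfl, hinv j]
        rfl
      have hsummand : ∀ i ∈ univ.filter (fun i' => J i' = j),
          (2*c+1)*‖aa j‖^2 + 2*⟪aa j, ww i⟫ + 2*‖ww i‖^2
          = ((2*c+1)*‖aa j‖^2 - 2*⟪aa j, S.u j - κ • S.hvec j⟫
              + 2*‖S.u j - κ • S.hvec j‖^2)
            + (2*⟪aa j, zz i⟫ + 2*‖zz i‖^2 - 4*⟪zz i, S.u j - κ • S.hvec j⟫) := by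
        intro i hi
        rw [hwT i hi, inner_sub_right, norm_sub_sq_real]
        ring
      have hFB : (∑ i ∈ univ.filter (fun i' => J i' = j),
            ((2*c+1)*‖aa j‖^2 + 2*⟪aa j, ww i⟫ + 2*‖ww i‖^2))
          = N * ((2*c+1)*‖aa j‖^2 - 2*⟪aa j, S.u j - κ • S.hvec j⟫
              + 2*‖S.u j - κ • S.hvec j‖^2)
            + (2*⟪aa j, ∑ i ∈ univ.filter (fun i' => J i' = j), zz i⟫
            + 2*(∑ i ∈ univ.filter (fun i' => J i' = j), ‖zz i‖^2)
            - 4*⟪∑ i ∈ univ.filter (fun i' => J i' = j), zz i, S.u j - κ • S.hvec j⟫) := by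
        rw [Finset.sum_congr rfl hsummand, Finset.sum_add_distrib, Finset.sum_const,
          nsmul_eq_mul, hTcard]
        congr 1
        rw [Finset.sum_sub_distrib, Finset.sum_add_distrib]
        rw [← Finset.mul_sum, ← Finset.mul_sum, ← Finset.mul_sum]
        rw [← inner_sum, ← sum_inner]
      rw [hFB, hZD]
      set DD : EuclideanSpace ℝ (Fin d) :=
        ∑ i ∈ univ.filter (fun i' => J i' = j), (gradf i S.x - S.alpha i) with hDDdef
      have k5 : ‖aa j‖^2 = ‖S.u j‖^2 + 2*⟪S.u j, S.abar⟫ + ‖S.abar‖^2 := by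
        rw [haadef]; exact norm_add_sq_real _ _
      have k1 : ⟪aa j, DD - S.hvec j⟫
          = ⟪S.u j, DD⟫ + ⟪S.abar, DD⟫ - ⟪S.u j, S.hvec j⟫ - ⟪S.abar, S.hvec j⟫ := by
        rw [haadef]
        simp only [inner_add_left, inner_sub_right]
        ring
      have k2 : ⟪aa j, S.u j - κ • S.hvec j⟫
          = ‖S.u j‖^2 - κ*⟪S.u j, S.hvec j⟫ + ⟪S.u j, S.abar⟫ - κ*⟪S.abar, S.hvec j⟫ := by
        rw [haadef]
        simp only [inner_add_left, inner_sub_right, real_inner_smul_right,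
          real_inner_self_eq_norm_sq]
        rw [real_inner_comm S.abar (S.u j)]
        ring
      have k3 : ⟪DD - S.hvec j, S.u j - κ • S.hvec j⟫
          = ⟪S.u j, DD⟫ - κ*⟪DD, S.hvec j⟫ - ⟪S.u j, S.hvec j⟫ + κ*‖S.hvec j‖^2 := by
        simp only [inner_sub_left, inner_sub_right, real_inner_smul_right,
          real_inner_self_eq_norm_sq]
        rw [real_inner_comm DD (S.u j), real_inner_comm (S.hvec j) (S.u j)]
        ring
      have k4 : ‖S.u j - κ • S.hvec j‖^2
          = ‖S.u j‖^2 - 2*κ*⟪S.u j, S.hvec j⟫ + κ^2*‖S.hvec j‖^2 := by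
        rw [norm_sub_sq_real, real_inner_smul_right, norm_smul, Real.norm_eq_abs,
          mul_pow, sq_abs]
        ring
      rw [k1, k2, k3, k4, k5]
      have hexp : N * ((2*c+1)*(‖S.u j‖^2 + 2*⟪S.u j, S.abar⟫ + ‖S.abar‖^2)
              - 2*(‖S.u j‖^2 - κ*⟪S.u j, S.hvec j⟫ + ⟪S.u j, S.abar⟫ - κ*⟪S.abar, S.hvec j⟫)
              + 2*(‖S.u j‖^2 - 2*κ*⟪S.u j, S.hvec j⟫ + κ^2*‖S.hvec j‖^2))
            + (2*(⟪S.u j, DD⟫ + ⟪S.abar, DD⟫ - ⟪S.u j, S.hvec j⟫ - ⟪S.abar, S.hvec j⟫)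
            + 2*(∑ i ∈ univ.filter (fun i' => J i' = j), ‖zz i‖^2)
            - 4*(⟪S.u j, DD⟫ - κ*⟪DD, S.hvec j⟫ - ⟪S.u j, S.hvec j⟫ + κ*‖S.hvec j‖^2))
          = N*((2*c+1)*(‖S.u j‖^2 + ‖S.abar‖^2) + 4*c*⟪S.u j, S.abar⟫)
            - 2*⟪S.u j, DD⟫ + 2*⟪S.abar, DD⟫ + 4*κ*⟪DD, S.hvec j⟫ - 2*κ*‖S.hvec j‖^2
            + 2*(∑ i ∈ univ.filter (fun i' => J i' = j), ‖zz i‖^2) := by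
        linear_combination (-2*⟪S.u j, S.hvec j⟫ + 2*⟪S.abar, S.hvec j⟫
          + 2*κ*‖S.hvec j‖^2) * hκN
      rw [hexp]
      apply mul_le_of_bounds _ _ _ (hq0 j) (hq1 j)
      · -- main estimate
        have E1 : 2*⟪S.u j, S.abar⟫ ≤ ‖S.u j‖^2 + ‖S.abar‖^2 := two_inner_le' _ _
        have m1 : (2*c*N) * (2*⟪S.u j, S.abar⟫) ≤ (2*c*N) * (‖S.u j‖^2 + ‖S.abar‖^2) :=
          mul_le_mul_of_nonneg_left E1 (by positivity)
        have E2 : 2*(⟪S.abar, DD⟫ - ⟪S.u j, DD⟫)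
            ≤ (3*N/2)*‖S.abar - S.u j‖^2 + (2/3*κ)*‖DD‖^2 := by
          have h := amgm_inner (3*N/2) (by positivity) (S.abar - S.u j) DD
          rw [inner_sub_left] at h
          have hn' : (n:ℝ) ≠ 0 := ne_of_gt hn0
          have hm' : (m:ℝ) ≠ 0 := ne_of_gt hm0
          have hi : (3*N/2)⁻¹ = 2/3*κ := by
            rw [hNdef, hκdef]
            field_simp
          rw [hi] at h
          linarith
        have m3 : (3*N/2) * ‖S.abar - S.u j‖^2
            ≤ (3*N/2) * (2*‖S.abar‖^2 + 2*‖S.u j‖^2) := by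
          apply mul_le_mul_of_nonneg_left _ (by positivity)
          have h := norm_sub_sq_le' 1 one_pos S.abar (S.u j)
          norm_num [inv_one] at h ⊢
          linarith
        have E4 : 4*⟪DD, S.hvec j⟫ ≤ (2/3)*‖DD‖^2 + 6*‖S.hvec j‖^2 := by
          have h := amgm_inner (1/3) (by norm_num) DD (S.hvec j)
          have h3 : ((1:ℝ)/3)⁻¹ = 3 := by norm_num
          rw [h3] at h
          linarith
        have m4 : κ * (4*⟪DD, S.hvec j⟫) ≤ κ * ((2/3)*‖DD‖^2 + 6*‖S.hvec j‖^2) :=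
          mul_le_mul_of_nonneg_left E4 hκ0'
        have E5 : ‖DD‖^2 ≤ N * (∑ i ∈ univ.filter (fun i' => J i' = j),
            ‖gradf i S.x - S.alpha i‖^2) := by
          have h := sq_norm_sum_le (univ.filter (fun i' => J i' = j))
            (fun i => gradf i S.x - S.alpha i)
          rw [hTcard] at h
          exact h
        have m5 : κ * ‖DD‖^2 ≤ ∑ i ∈ univ.filter (fun i' => J i' = j),
            ‖gradf i S.x - S.alpha i‖^2 := by
          have h := mul_le_mul_of_nonneg_left E5 hκ0'
          have h2 : κ * (N * (∑ i ∈ univ.filter (fun i' => J i' = j),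
              ‖gradf i S.x - S.alpha i‖^2)) = ∑ i ∈ univ.filter (fun i' => J i' = j),
              ‖gradf i S.x - S.alpha i‖^2 := by
            linear_combination (∑ i ∈ univ.filter (fun i' => J i' = j),
              ‖gradf i S.x - S.alpha i‖^2) * hκN
          linarith
        have E6 : (∑ i ∈ univ.filter (fun i' => J i' = j), ‖gradf i S.x - S.alpha i‖^2)
            ≤ (3/2)*(∑ i ∈ univ.filter (fun i' => J i' = j),
                ‖gradf i S.x - gradf i xstar‖^2)
              + 3*(∑ i ∈ univ.filter (fun i' => J i' = j),
                ‖S.alpha i - gradf i xstar‖^2) := by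
          have h : ∀ i ∈ univ.filter (fun i' => J i' = j),
              ‖gradf i S.x - S.alpha i‖^2
              ≤ (3/2)*‖gradf i S.x - gradf i xstar‖^2
                + 3*‖S.alpha i - gradf i xstar‖^2 := by
            intro i _
            have hdi : gradf i S.x - S.alpha i
                = (gradf i S.x - gradf i xstar) - (S.alpha i - gradf i xstar) := by abel
            rw [hdi]
            have h2 := norm_sub_sq_le' (1/2) (by norm_num)
              (gradf i S.x - gradf i xstar) (S.alpha i - gradf i xstar)
            have h3 : ((1:ℝ)/2)⁻¹ = 2 := by norm_num
            rw [h3] at h2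
            linarith
          calc (∑ i ∈ univ.filter (fun i' => J i' = j), ‖gradf i S.x - S.alpha i‖^2)
              ≤ ∑ i ∈ univ.filter (fun i' => J i' = j),
                ((3/2)*‖gradf i S.x - gradf i xstar‖^2
                  + 3*‖S.alpha i - gradf i xstar‖^2) := Finset.sum_le_sum h
            _ = _ := by
                rw [Finset.sum_add_distrib, ← Finset.mul_sum, ← Finset.mul_sum]
        have E7 : (∑ i ∈ univ.filter (fun i' => J i' = j), ‖zz i‖^2)
            ≤ (∑ i ∈ univ.filter (fun i' => J i' = j), ‖gradf i S.x - S.alpha i‖^2)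
              + ‖zz (S.idx j)‖^2 := by
          have hsz : (∑ i ∈ univ.filter (fun i' => J i' = j),
              (‖zz i‖^2 - ‖gradf i S.x - S.alpha i‖^2))
              = ‖zz (S.idx j)‖^2 - ‖gradf (S.idx j) S.x - S.alpha (S.idx j)‖^2 := by
            apply Finset.sum_eq_single_of_mem (S.idx j) hidxT
            intro i hi hne
            have hz : zz i = gradf i S.x - S.alpha i := by
              simp only [hzzdef, hbbdef]
              rw [(Finset.mem_filter.mp hi).2, if_neg hne]
            rw [hz, sub_self]
          rw [Finset.sum_sub_distrib] at hsz
          have := sq_nonneg ‖gradf (S.idx j) S.x - S.alpha (S.idx j)‖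
          linarith
        have E8 : ‖zz (S.idx j)‖^2
            ≤ (4/3)*‖gradf (S.idx j) S.x - gradf (S.idx j) xstar‖^2
              + 4*‖S.g j - gradf (S.idx j) xstar‖^2 := by
          have hz : zz (S.idx j) = (gradf (S.idx j) S.x - gradf (S.idx j) xstar)
              - (S.g j - gradf (S.idx j) xstar) := by
            simp only [hzzdef, hbbdef]
            rw [hidx j, if_pos rfl]
            abel
          rw [hz]
          have h2 := norm_sub_sq_le' (1/3) (by norm_num)
            (gradf (S.idx j) S.x - gradf (S.idx j) xstar) (S.g j - gradf (S.idx j) xstar)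
          have h3 : ((1:ℝ)/3)⁻¹ = 3 := by norm_num
          rw [h3] at h2
          linarith
        have E8b : ‖gradf (S.idx j) S.x - gradf (S.idx j) xstar‖^2
            ≤ ∑ i ∈ univ.filter (fun i' => J i' = j), ‖gradf i S.x - gradf i xstar‖^2 :=
          Finset.single_le_sum (f := fun i => ‖gradf i S.x - gradf i xstar‖^2)
            (fun i _ => sq_nonneg _) hidxT
        have E9 : ‖S.hvec j‖^2 ≤ 2*‖S.g j - gradf (S.idx j) xstar‖^2
            + 2*‖S.beta j - gradf (S.idx j) xstar‖^2 := by
          have hh : S.hvec j = (S.g j - gradf (S.idx j) xstar)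
              - (S.beta j - gradf (S.idx j) xstar) := by
            show S.g j - S.beta j = _
            abel
          rw [hh]
          have h2 := norm_sub_sq_le' 1 one_pos (S.g j - gradf (S.idx j) xstar)
            (S.beta j - gradf (S.idx j) xstar)
          rw [inv_one] at h2
          linarith
        have m9 : κ * ‖S.hvec j‖^2 ≤ κ * (2*‖S.g j - gradf (S.idx j) xstar‖^2
            + 2*‖S.beta j - gradf (S.idx j) xstar‖^2) :=
          mul_le_mul_of_nonneg_left E9 hκ0'
        have m10 : κ * ‖S.g j - gradf (S.idx j) xstar‖^2
            ≤ ‖S.g j - gradf (S.idx j) xstar‖^2 :=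
          mul_le_of_le_one_left (sq_nonneg _) hκ1
        have m11 : κ * ‖S.beta j - gradf (S.idx j) xstar‖^2
            ≤ ‖S.beta j - gradf (S.idx j) xstar‖^2 :=
          mul_le_of_le_one_left (sq_nonneg _) hκ1
        have hSD0 : 0 ≤ ∑ i ∈ univ.filter (fun i' => J i' = j),
            ‖gradf i S.x - gradf i xstar‖^2 :=
          Finset.sum_nonneg (fun i _ => sq_nonneg _)
        have hBt0 : 0 ≤ ‖S.beta j - gradf (S.idx j) xstar‖^2 := sq_nonneg _
        linarith [m1, E2, m3, m4, m5, E6, E7, E8, E8b, m9, m10, m11, hSD0, hBt0]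
      · -- nonnegativity of the right hand side
        have h1 : 0 ≤ ∑ i ∈ univ.filter (fun i' => J i' = j),
            ‖S.alpha i - gradf i xstar‖^2 := Finset.sum_nonneg (fun i _ => sq_nonneg _)
        have h2 : 0 ≤ ∑ i ∈ univ.filter (fun i' => J i' = j),
            ‖gradf i S.x - gradf i xstar‖^2 := Finset.sum_nonneg (fun i _ => sq_nonneg _)
        have h3 : (0:ℝ) ≤ N*(4*c+4) := by positivity
        linarith [sq_nonneg ‖S.u j‖, sq_nonneg ‖S.abar‖, sq_nonneg ‖S.g j - gradf (S.idx j) xstar‖,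
          sq_nonneg ‖S.beta j - gradf (S.idx j) xstar‖, mul_nonneg h3 (add_nonneg (sq_nonneg ‖S.u j‖) (sq_nonneg ‖S.abar‖)), h1, h2]
    -- assemble over all machines
    have h1 : (∑ i, q (J i) * ((2*c+1)*‖aa (J i)‖^2 + 2*⟪aa (J i), ww i⟫ + 2*‖ww i‖^2))
        = ∑ j, (q j) * (∑ i ∈ univ.filter (fun i' => J i' = j),
            ((2*c+1)*‖aa j‖^2 + 2*⟪aa j, ww i⟫ + 2*‖ww i‖^2)) := by
      rw [← Finset.sum_fiberwise univ J (fun i => q (J i) *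
        ((2*c+1)*‖aa (J i)‖^2 + 2*⟪aa (J i), ww i⟫ + 2*‖ww i‖^2))]
      apply Finset.sum_congr rfl
      intro j _
      rw [Finset.mul_sum]
      apply Finset.sum_congr rfl
      intro i hi
      rw [(Finset.mem_filter.mp hi).2]
    have h2 := Finset.sum_le_sum (fun j (_ : j ∈ (univ : Finset (Fin m))) => key j)
    have h3 := mul_le_mul_of_nonneg_left h2 hκ0'
    rw [h1]
    refine le_trans h3 ?_
    have h4 : (∑ j, (N*(4*c+4)*(‖S.u j‖^2 + ‖S.abar‖^2)
          + 16*(‖S.g j - gradf (S.idx j) xstar‖^2 + ‖S.beta j - gradf (S.idx j) xstar‖^2)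
          + 10*(∑ i ∈ univ.filter (fun i' => J i' = j), ‖S.alpha i - gradf i xstar‖^2)
          + 8*(∑ i ∈ univ.filter (fun i' => J i' = j), ‖gradf i S.x - gradf i xstar‖^2)))
        = N*(4*c+4)*((∑ j, ‖S.u j‖^2) + (m:ℝ)*‖S.abar‖^2)
          + 16*((∑ j, ‖S.g j - gradf (S.idx j) xstar‖^2)
            + (∑ j, ‖S.beta j - gradf (S.idx j) xstar‖^2))
          + 10*(∑ i, ‖S.alpha i - gradf i xstar‖^2)
          + 8*(∑ i, ‖gradf i S.x - gradf i xstar‖^2) := by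
      rw [Finset.sum_add_distrib, Finset.sum_add_distrib, Finset.sum_add_distrib]
      rw [← Finset.mul_sum, ← Finset.mul_sum, ← Finset.mul_sum, ← Finset.mul_sum]
      rw [Finset.sum_fiberwise univ J (fun i => ‖S.alpha i - gradf i xstar‖^2)]
      rw [Finset.sum_fiberwise univ J (fun i => ‖gradf i S.x - gradf i xstar‖^2)]
      rw [Finset.sum_add_distrib, Finset.sum_add_distrib, Finset.sum_const,
        Finset.card_univ, Fintype.card_fin, nsmul_eq_mul]
    have habar2 : (m:ℝ)*‖S.abar‖^2 ≤ κ * ∑ i, ‖S.alpha i - gradf i xstar‖^2 := by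
      have habar : S.abar = ((1:ℝ)/n) • ∑ i, (S.alpha i - gradf i xstar) := by
        show ((1:ℝ)/n) • ∑ i, S.alpha i = _
        congr 1
        rw [Finset.sum_sub_distrib, hstarzero, sub_zero]
      have hJ := sq_norm_sum_le (univ : Finset (Fin n))
        (fun i => S.alpha i - gradf i xstar)
      rw [Finset.card_univ, Fintype.card_fin] at hJ
      have hnn : (0:ℝ) ≤ (m:ℝ)*((1/(n:ℝ))^2) := by positivity
      have h5 := mul_le_mul_of_nonneg_left hJ hnn
      have h6 : (m:ℝ)*((1/(n:ℝ))^2) * ((n:ℝ) * ∑ i, ‖S.alpha i - gradf i xstar‖^2)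
          = κ * ∑ i, ‖S.alpha i - gradf i xstar‖^2 := by
        rw [hκdef]
        field_simp
      rw [habar, norm_smul, Real.norm_eq_abs, mul_pow, sq_abs]
      calc (m:ℝ) * (((1:ℝ)/n)^2 * ‖∑ i, (S.alpha i - gradf i xstar)‖^2)
          = (m:ℝ)*((1/(n:ℝ))^2) * ‖∑ i, (S.alpha i - gradf i xstar)‖^2 := by ring
        _ ≤ (m:ℝ)*((1/(n:ℝ))^2) * ((n:ℝ) * ∑ i, ‖S.alpha i - gradf i xstar‖^2) := h5
        _ = κ * ∑ i, ‖S.alpha i - gradf i xstar‖^2 := h6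
    rw [h4]
    have e0 : κ * (N*(4*c+4)*((∑ j, ‖S.u j‖^2) + (m:ℝ)*‖S.abar‖^2))
        = (4*c+4)*(∑ j, ‖S.u j‖^2) + (4*c+4)*((m:ℝ)*‖S.abar‖^2) := by
      linear_combination ((4*c+4)*((∑ j, ‖S.u j‖^2) + (m:ℝ)*‖S.abar‖^2)) * hκN
    have e1 := mul_le_mul_of_nonneg_left habar2 (by positivity : (0:ℝ) ≤ 4*c+4)
    have e2 : 0 ≤ κ * ∑ i, ‖S.alpha i - gradf i xstar‖^2 :=
      mul_nonneg hκ0' (Finset.sum_nonneg (fun i _ => sq_nonneg _))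
    linarith [e0, e1, e2]

  -- final assembly
  have hrem : κ * pmin * η^2 * ∑ i, q (J i) *
            ((2*c+1)*‖aa (J i)‖^2 + 2*⟪aa (J i), ww i⟫ + 2*‖ww i‖^2)
      ≤ η ^ 2 * pmin * (4 * (m:ℝ) * Lf * η + 4) * (∑ j, ‖S.u j‖ ^ 2)
        + (16 * (m:ℝ) * pmin * η ^ 2 / n) * (∑ j, ‖S.g j - gradf (S.idx j) xstar‖ ^ 2)
        + (16 * (m:ℝ) * pmin * η ^ 2 / n) * (∑ j, ‖S.beta j - gradf (S.idx j) xstar‖ ^ 2)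
        + (η ^ 2 * (m:ℝ) * pmin / n) * (4 * (m:ℝ) * η * Lf + 16) *
            (∑ i, ‖S.alpha i - gradf i xstar‖ ^ 2)
        + (8 * (m:ℝ) * pmin * η ^ 2 / n) * (∑ i, ‖gradf i S.x - gradf i xstar‖ ^ 2) := by
    have hps : 0 < pmin * η^2 := by positivity
    have := mul_le_mul_of_nonneg_left hstage2 (le_of_lt hps)
    calc κ * pmin * η^2 * ∑ i, q (J i) *
            ((2*c+1)*‖aa (J i)‖^2 + 2*⟪aa (J i), ww i⟫ + 2*‖ww i‖^2)
        = pmin * η^2 * (κ * ∑ i, q (J i) *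
            ((2*c+1)*‖aa (J i)‖^2 + 2*⟪aa (J i), ww i⟫ + 2*‖ww i‖^2)) := by ring
      _ ≤ pmin * η^2 * ((4*c+4) * (∑ j, ‖S.u j‖^2)
        + 16*κ*(∑ j, ‖S.g j - gradf (S.idx j) xstar‖^2)
        + 16*κ*(∑ j, ‖S.beta j - gradf (S.idx j) xstar‖^2)
        + κ*(4*c+16)*(∑ i, ‖S.alpha i - gradf i xstar‖^2)
        + 8*κ*(∑ i, ‖gradf i S.x - gradf i xstar‖^2)) := this
      _ = η ^ 2 * pmin * (4 * (m:ℝ) * Lf * η + 4) * (∑ j, ‖S.u j‖ ^ 2)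
        + (16 * (m:ℝ) * pmin * η ^ 2 / n) * (∑ j, ‖S.g j - gradf (S.idx j) xstar‖ ^ 2)
        + (16 * (m:ℝ) * pmin * η ^ 2 / n) * (∑ j, ‖S.beta j - gradf (S.idx j) xstar‖ ^ 2)
        + (η ^ 2 * (m:ℝ) * pmin / n) * (4 * (m:ℝ) * η * Lf + 16) *
            (∑ i, ‖S.alpha i - gradf i xstar‖ ^ 2)
        + (8 * (m:ℝ) * pmin * η ^ 2 / n) * (∑ i, ‖gradf i S.x - gradf i xstar‖ ^ 2) := by
          rw [hκdef, hcdef]; ring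
  calc (∑ i : Fin n, p (J i) * κ *
        (phi1 f xstar η (AdsagaState.step gradf p pmin η S (J i) i) + phi2 xstar η (AdsagaState.step gradf p pmin η S (J i) i)))
        - (phi1 f xstar η S + phi2 xstar η S)
      ≤ ∑ i, p (J i) * κ * bound i := hred
    _ = -2 * pmin * η ^ 2 * ‖S.v‖ ^ 2 - (2 * η * (m:ℝ) * pmin / n) * ⟪y, ∑ i, gradf i S.x⟫
        + κ * pmin * η^2 * ∑ i, q (J i) *
            ((2*c+1)*‖aa (J i)‖^2 + 2*⟪aa (J i), ww i⟫ + 2*‖ww i‖^2) := hclosed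
    _ ≤ _ := by
        have := hrem
        linarith
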